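/- For 0 < ε < 1, the Szlenk derivative of the unit ball of the dual of c₀ satisfies (B_{c₀*})'_{2ε} = (1 − ε)·B_{c₀*}. -/

import Mathlib

open NormedSpace Metric Pointwise Filter Topology ZeroAtInftyContinuousMap

/-- The Szlenk derivative of a set `F` in the dual of `X`. -/
def szlenkDeriv (X : Type*) [NormedAddCommGroup X] [NormedSpace ℝ X]
    (F : Set (StrongDual ℝ X)) (ε : ℝ) : Set (StrongDual ℝ X) :=
  {f ∈ F | ∀ V : Set (WeakDual ℝ X), IsOpen V → StrongDual.toWeakDual f ∈ V →
    ε ≤ diam ((StrongDual.toWeakDual ⁻¹' V : Set (StrongDual ℝ X)) ∩ F)}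

namespace Stmt5Aux

noncomputable section

abbrev c0 := ZeroAtInftyContinuousMap ℕ ℝ

lemma abs_apply_le_norm (x : c0) (i : ℕ) : |x i| ≤ ‖x‖ := by
  rw [← ZeroAtInftyContinuousMap.norm_toBCF_eq_norm]
  exact x.toBCF.norm_coe_le_norm i

lemma norm_le_of_forall {x : c0} {C : ℝ} (hC : 0 ≤ C) (h : ∀ i, |x i| ≤ C) : ‖x‖ ≤ C := by
  rw [← ZeroAtInftyContinuousMap.norm_toBCF_eq_norm]
  exact (BoundedContinuousFunction.norm_le hC).2 h

lemma norm_smul_c0 (s : ℝ) (x : c0) : ‖s • x‖ = |s| * ‖x‖ := by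
  rw [← ZeroAtInftyContinuousMap.norm_toBCF_eq_norm,
    ← ZeroAtInftyContinuousMap.norm_toBCF_eq_norm (f := x)]
  have : (s • x).toBCF = s • x.toBCF := rfl
  rw [this, norm_smul]; simp

/-- truncation to the first `N` coordinates -/
def trunc (x : c0) (N : ℕ) : c0 where
  toFun := fun i => if i < N then x i else 0
  continuous_toFun := continuous_of_discreteTopology
  zero_at_infty' := by
    rw [cocompact_eq_cofinite, Nat.cofinite_eq_atTop]
    refine tendsto_const_nhds.congr' ?_
    filter_upwards [eventually_ge_atTop N] with i hi
    simp [Nat.not_lt.2 hi]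

@[simp] lemma trunc_apply (x : c0) (N i : ℕ) : trunc x N i = if i < N then x i else 0 := rfl

/-- basis vector -/
def e (n : ℕ) : c0 where
  toFun := fun i => if i = n then 1 else 0
  continuous_toFun := continuous_of_discreteTopology
  zero_at_infty' := by
    rw [cocompact_eq_cofinite, Nat.cofinite_eq_atTop]
    refine tendsto_const_nhds.congr' ?_
    filter_upwards [eventually_ge_atTop (n+1)] with i hi
    simp [Nat.ne_of_gt hi]

@[simp] lemma e_apply (n i : ℕ) : e n i = if i = n then 1 else 0 := rfl

lemma norm_e_le (n : ℕ) : ‖e n‖ ≤ 1 := by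
  refine norm_le_of_forall zero_le_one fun i => ?_
  by_cases h : i = n <;> simp [h]

lemma norm_smul_dual (s : ℝ) (f : StrongDual ℝ c0) : ‖s • f‖ = ‖s‖ * ‖f‖ := by
  have := @norm_smul ℝ (StrongDual ℝ c0) _ _ _ NormedSpace.toNormSMulClass s f
  exact this

/-- evaluation functional -/
def ev (n : ℕ) : StrongDual ℝ c0 :=
  LinearMap.mkContinuous
    { toFun := fun x => x n
      map_add' := fun x y => rfl
      map_smul' := fun c x => rfl } 1
    (fun x => by simpa using abs_apply_le_norm x n)

@[simp] lemma ev_apply (n : ℕ) (x : c0) : ev n x = x n := rfl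

lemma norm_ev (n : ℕ) : ‖ev n‖ = 1 := by
  refine le_antisymm (LinearMap.mkContinuous_norm_le _ zero_le_one _) ?_
  have h := (ev n).le_opNorm (e n)
  simp only [ev_apply, e_apply, if_pos rfl, if_true, norm_one] at h
  nlinarith [norm_e_le n, (ev n).opNorm_nonneg, h]

lemma sum_apply {s : Finset ℕ} (f : ℕ → c0) (j : ℕ) :
    (∑ i ∈ s, f i) j = ∑ i ∈ s, f i j := by
  classical
  induction s using Finset.induction_on with
  | empty => simp
  | insert _ _ h ih => rw [Finset.sum_insert h, Finset.sum_insert h, ZeroAtInftyContinuousMap.add_apply, ih]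

lemma trunc_eq_sum (x : c0) (N : ℕ) :
    trunc x N = ∑ i ∈ Finset.range N, x i • e i := by
  ext j
  rw [sum_apply]
  simp only [trunc_apply, ZeroAtInftyContinuousMap.coe_smul, Pi.smul_apply, e_apply,
    smul_eq_mul, mul_ite, mul_one, mul_zero]
  simp only [eq_comm (a := j)]
  rw [Finset.sum_ite_eq' (Finset.range N) j (fun i => x i)]
  simp [Finset.mem_range]

lemma tendsto_apply_atTop (x : c0) : Tendsto (fun n => x n) atTop (𝓝 0) := by
  have := zero_at_infty x
  rwa [cocompact_eq_cofinite, Nat.cofinite_eq_atTop] at this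

/-- the easy inclusion -/
lemma mem_deriv_of_norm_le {ε : ℝ} (hε0 : 0 < ε) (hε1 : ε < 1) (f : StrongDual ℝ c0)
    (hf : ‖f‖ ≤ 1 - ε) :
    f ∈ szlenkDeriv c0 (closedBall 0 1) (2 * ε) := by
  refine ⟨by rw [mem_closedBall_zero_iff]; linarith, ?_⟩
  intro V hV hfV
  have key : ∀ s : ℝ, |s| ≤ ε →
      Tendsto (fun n => StrongDual.toWeakDual (f + s • ev n)) atTop (𝓝 (StrongDual.toWeakDual f)) := by
    intro s _
    rw [tendsto_iff_forall_eval_tendsto_topDualPairing]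
    intro y
    have h1 : Tendsto (fun n => f y + s * y n) atTop (𝓝 (f y + s * 0)) :=
      tendsto_const_nhds.add ((tendsto_apply_atTop y).const_mul s)
    rw [mul_zero, add_zero] at h1; exact h1
  have hVn : V ∈ 𝓝 (StrongDual.toWeakDual f) := hV.mem_nhds hfV
  have hev : ∀ᶠ n in atTop,
      StrongDual.toWeakDual (f + ε • ev n) ∈ V ∧ StrongDual.toWeakDual (f + (-ε) • ev n) ∈ V :=
    ((key ε (by rw [abs_of_pos hε0])).eventually_mem hVn).and
      ((key (-ε) (by rw [abs_neg, abs_of_pos hε0])).eventually_mem hVn)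
  obtain ⟨n, hn1, hn2⟩ := hev.exists
  have hmem : ∀ s : ℝ, |s| ≤ ε → f + s • ev n ∈ closedBall (0 : StrongDual ℝ c0) 1 := by
    intro s hs
    rw [mem_closedBall_zero_iff (E := StrongDual ℝ c0)]
    calc ‖f + s • ev n‖ ≤ ‖f‖ + ‖s • ev n‖ := norm_add_le f (s • ev n)
      _ = ‖f‖ + |s| * 1 := by rw [norm_smul_dual, Real.norm_eq_abs, norm_ev]
      _ ≤ (1 - ε) + ε := by nlinarith
      _ = 1 := by ring
  have hbdd : Bornology.IsBounded (((⇑(StrongDual.toWeakDual (𝕜 := ℝ) (E := c0)) ⁻¹' V))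
      ∩ (closedBall 0 1 : Set (StrongDual ℝ c0))) :=
    (isBounded_closedBall).subset Set.inter_subset_right
  have hd : dist (f + ε • ev n) (f + (-ε) • ev n) = 2 * ε := by
    rw [dist_eq_norm (E := StrongDual ℝ c0)]
    have : (f + ε • ev n) - (f + (-ε) • ev n) = (2 * ε) • ev n := by
      module
    rw [this, norm_smul_dual, Real.norm_eq_abs, norm_ev, mul_one, abs_of_pos (by linarith)]
  calc 2 * ε = dist (f + ε • ev n) (f + (-ε) • ev n) := hd.symm
    _ ≤ diam _ := dist_le_diam_of_mem hbdd ⟨hn1, hmem ε (by rw [abs_of_pos hε0])⟩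
        ⟨hn2, hmem (-ε) (by rw [abs_neg, abs_of_pos hε0])⟩

set_option maxHeartbeats 1000000 in
/-- the hard inclusion -/
lemma norm_le_of_mem_deriv {ε : ℝ} (hε0 : 0 < ε) (hε1 : ε < 1) (f : StrongDual ℝ c0)
    (hf : f ∈ szlenkDeriv c0 (closedBall 0 1) (2 * ε)) : ‖f‖ ≤ 1 - ε := by
  obtain ⟨hfB, hd⟩ := hf
  rw [mem_closedBall_zero_iff] at hfB
  by_contra hcon
  push_neg at hcon
  -- find a unit vector where `f` is large
  obtain ⟨x, hx1, hx2⟩ : ∃ x : c0, ‖x‖ ≤ 1 ∧ 1 - ε < f x := by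
    by_contra hno
    push_neg at hno
    have hb : ‖f‖ ≤ 1 - ε := by
      refine f.opNorm_le_bound (by linarith) fun z => ?_
      rcases eq_or_ne z 0 with rfl | hz0
      · simp
      · have hzn : (0:ℝ) < ‖z‖ := norm_pos_iff.2 hz0
        set u : c0 := ‖z‖⁻¹ • z with hu
        have hun : ‖u‖ ≤ 1 := by
          rw [hu, norm_smul_c0, abs_inv, abs_norm, inv_mul_cancel₀ hzn.ne']
        have h1 : f u ≤ 1 - ε := hno u hun
        have h2 : f (-u) ≤ 1 - ε := hno (-u) (by rwa [norm_neg])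
        rw [map_neg] at h2
        have habs : |f u| ≤ 1 - ε := abs_le.2 ⟨by linarith, h1⟩
        have hzu : z = ‖z‖ • u := by
          rw [hu, smul_smul, mul_inv_cancel₀ hzn.ne', one_smul]
        have hfz : f z = ‖z‖ * f u := by
          conv_lhs => rw [hzu]
          rw [map_smul, smul_eq_mul]
        calc ‖f z‖ = |f z| := rfl
          _ = ‖z‖ * |f u| := by rw [hfz, abs_mul, abs_of_pos hzn]
          _ ≤ (1 - ε) * ‖z‖ := by nlinarith
    linarith
  set θ : ℝ := (f x - (1 - ε)) / 3 with hθdef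
  have hθ : 0 < θ := by rw [hθdef]; linarith
  have hfx1 : f x ≤ 1 := by
    have h1 := f.le_opNorm x
    have h2 : |f x| ≤ 1 := by
      refine le_trans (le_trans (le_refl _) h1) ?_
      nlinarith [norm_nonneg x, f.opNorm_nonneg]
    exact le_trans (le_abs_self _) h2
  have hθε : 3 * θ ≤ ε := by rw [hθdef]; linarith
  -- choose N
  obtain ⟨N, hN⟩ : ∃ N, ∀ i ≥ N, |x i| ≤ θ := by
    have := Metric.tendsto_atTop.1 (tendsto_apply_atTop x) θ hθ
    obtain ⟨N, hN⟩ := this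
    exact ⟨N, fun i hi => by
      have := hN i hi
      rw [Real.dist_eq, sub_zero] at this
      exact this.le⟩
  set x' : c0 := trunc x N with hx'
  have hxx' : ‖x - x'‖ ≤ θ := by
    refine norm_le_of_forall hθ.le fun i => ?_
    rw [ZeroAtInftyContinuousMap.sub_apply, hx', trunc_apply]
    by_cases h : i < N
    · simp [h, hθ.le]
    · rw [if_neg h, sub_zero]
      exact hN i (Nat.not_lt.1 h)
  have hfx' : 1 - ε + 2 * θ ≤ f x' := by
    have h1 : |f (x - x')| ≤ θ := by
      have := f.le_opNorm (x - x')
      calc |f (x - x')| = ‖f (x - x')‖ := rfl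
        _ ≤ ‖f‖ * ‖x - x'‖ := this
        _ ≤ 1 * θ := by
            apply mul_le_mul hfB hxx' (norm_nonneg _) zero_le_one
        _ = θ := one_mul θ
    have h2 : f x - f x' = f (x - x') := (map_sub f x x').symm
    have h3 : f x = 1 - ε + 3 * θ := by rw [hθdef]; ring
    have := abs_le.1 h1
    linarith [this.2]
  have hx'n : ‖x'‖ ≤ 1 := by
    refine norm_le_of_forall zero_le_one fun i => ?_
    rw [hx', trunc_apply]
    by_cases h : i < N
    · simpa [h] using le_trans (abs_apply_le_norm x i) hx1
    · simp [h]
  set c : ℝ := 1 - ε + (3/2) * θ with hc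
  set δ' : ℝ := θ / (2 * (N + 1)) with hδ'
  have hδ'pos : 0 < δ' := by positivity
  -- the neighborhood
  set V : Set (WeakDual ℝ c0) :=
    {g : WeakDual ℝ c0 | c < g x'} ∩
      ⋂ i ∈ Finset.range N, {g : WeakDual ℝ c0 | g (e i) ∈ ball (f (e i)) δ'} with hV
  have hVopen : IsOpen V := by
    refine IsOpen.inter ?_ ?_
    · exact isOpen_lt continuous_const (WeakDual.eval_continuous x')
    · exact isOpen_biInter_finset fun i _ =>
        (WeakDual.eval_continuous (e i)).isOpen_preimage _ isOpen_ball
  have hfV : StrongDual.toWeakDual f ∈ V := by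
    constructor
    · show c < f x'
      rw [hc]; linarith
    · simp only [Set.mem_iInter]
      intro i _
      exact mem_ball_self hδ'pos
  have hdiam := hd V hVopen hfV
  -- the diameter bound
  have hbound : diam ((StrongDual.toWeakDual ⁻¹' V : Set (StrongDual ℝ c0)) ∩ closedBall 0 1)
      ≤ 2 * ε - 2 * θ := by
    refine diam_le_of_forall_dist_le (by linarith) fun g hg h hh => ?_
    obtain ⟨hgV, hgB⟩ := hg
    obtain ⟨hhV, hhB⟩ := hh
    rw [mem_closedBall_zero_iff (E := StrongDual ℝ c0)] at hgB hhB
    -- tail estimate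
    have tail : ∀ k : StrongDual ℝ c0, ‖k‖ ≤ 1 → c < k x' →
        ∀ w : c0, (∀ i, i < N → w i = 0) → |k w| ≤ (1 - c) * ‖w‖ := by
      intro k hk hkx w hw
      have unit : ∀ w : c0, (∀ i, i < N → w i = 0) → ‖w‖ ≤ 1 → |k w| ≤ 1 - c := by
        intro w hw hwn
        have hxw : ∀ s : ℝ, |s| ≤ 1 → ‖x' + s • w‖ ≤ 1 := by
          intro s hs
          refine norm_le_of_forall zero_le_one fun i => ?_
          rw [ZeroAtInftyContinuousMap.add_apply, ZeroAtInftyContinuousMap.smul_apply]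
          by_cases h : i < N
          · rw [hw i h]
            simp only [smul_zero, add_zero]
            rw [hx', trunc_apply, if_pos h]
            exact le_trans (abs_apply_le_norm x i) hx1
          · rw [hx', trunc_apply, if_neg h, zero_add, smul_eq_mul, abs_mul]
            calc |s| * |w i| ≤ 1 * 1 :=
              mul_le_mul hs (le_trans (abs_apply_le_norm w i) hwn) (abs_nonneg _) zero_le_one
            _ = 1 := one_mul 1
        have key : ∀ s : ℝ, |s| ≤ 1 → k x' + s * k w ≤ 1 := by
          intro s hs
          have h1 := k.le_opNorm (x' + s • w)
          have h2 : ‖k (x' + s • w)‖ ≤ 1 := by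
            calc ‖k (x' + s • w)‖ ≤ ‖k‖ * ‖x' + s • w‖ := h1
              _ ≤ 1 * 1 := mul_le_mul hk (hxw s hs) (norm_nonneg _) zero_le_one
              _ = 1 := one_mul 1
          have h3 : k (x' + s • w) = k x' + s * k w := by
            rw [map_add, map_smul, smul_eq_mul]
          rw [h3] at h2
          exact le_trans (le_abs_self _) h2
        have k1 := key 1 (by norm_num)
        have k2 := key (-1) (by norm_num)
        rw [one_mul] at k1
        rw [neg_one_mul] at k2
        refine abs_le.2 ⟨by linarith, by linarith⟩
      rcases eq_or_ne w 0 with rfl | hw0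
      · simp
      · have hwn : (0:ℝ) < ‖w‖ := norm_pos_iff.2 hw0
        set w' : c0 := ‖w‖⁻¹ • w with hw'
        have hw'0 : ∀ i, i < N → w' i = 0 := fun i hi => by
          rw [hw', ZeroAtInftyContinuousMap.smul_apply, hw i hi, smul_zero]
        have hw'n : ‖w'‖ ≤ 1 := by
          rw [hw', norm_smul_c0, abs_inv, abs_norm, inv_mul_cancel₀ hwn.ne']
        have := unit w' hw'0 hw'n
        have hww' : w = ‖w‖ • w' := by
          rw [hw', smul_smul, mul_inv_cancel₀ hwn.ne', one_smul]
        have hkw : k w = ‖w‖ * k w' := by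
          conv_lhs => rw [hww']
          rw [map_smul, smul_eq_mul]
        calc |k w| = ‖w‖ * |k w'| := by rw [hkw, abs_mul, abs_of_pos hwn]
          _ ≤ ‖w‖ * (1 - c) := by
              refine mul_le_mul_of_nonneg_left this hwn.le
          _ = (1 - c) * ‖w‖ := mul_comm _ _
    -- coordinate estimates
    have coord : ∀ i, i < N → |(g - h) (e i)| ≤ 2 * δ' := by
      intro i hi
      have hgV2 := hgV.2
      have hhV2 := hhV.2
      simp only [Set.mem_iInter] at hgV2 hhV2
      have hg' : |g (e i) - f (e i)| < δ' := by
        have h2 := hgV2 i (Finset.mem_range.2 hi)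
        simp only [Set.mem_setOf_eq, mem_ball, Real.dist_eq] at h2
        exact h2
      have hh' : |h (e i) - f (e i)| < δ' := by
        have h2 := hhV2 i (Finset.mem_range.2 hi)
        simp only [Set.mem_setOf_eq, mem_ball, Real.dist_eq] at h2
        exact h2
      have : (g - h) (e i) = (g (e i) - f (e i)) - (h (e i) - f (e i)) := by
        rw [ContinuousLinearMap.sub_apply]; ring
      rw [this]
      calc |(g (e i) - f (e i)) - (h (e i) - f (e i))|
          ≤ |g (e i) - f (e i)| + |h (e i) - f (e i)| := abs_sub _ _
        _ ≤ 2 * δ' := by linarith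
    rw [dist_eq_norm (E := StrongDual ℝ c0)]
    refine ContinuousLinearMap.opNorm_le_bound _ (by linarith) fun z => ?_
    set w : c0 := z - trunc z N with hw
    have hw0 : ∀ i, i < N → w i = 0 := fun i hi => by
      rw [hw, ZeroAtInftyContinuousMap.sub_apply, trunc_apply, if_pos hi, sub_self]
    have hwn : ‖w‖ ≤ ‖z‖ := by
      refine norm_le_of_forall (norm_nonneg z) fun i => ?_
      rw [hw, ZeroAtInftyContinuousMap.sub_apply, trunc_apply]
      by_cases h' : i < N
      · simp [h']
      · rw [if_neg h', sub_zero]; exact abs_apply_le_norm z i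
    have hzsplit : z = trunc z N + w := by rw [hw]; abel
    -- head estimate
    have head : |(g - h) (trunc z N)| ≤ θ * ‖z‖ := by
      rw [trunc_eq_sum, map_sum]
      calc |∑ i ∈ Finset.range N, (g - h) (z i • e i)|
          ≤ ∑ i ∈ Finset.range N, |(g - h) (z i • e i)| := Finset.abs_sum_le_sum_abs _ _
        _ ≤ ∑ i ∈ Finset.range N, ‖z‖ * (2 * δ') := by
            refine Finset.sum_le_sum fun i hi => ?_
            rw [map_smul, smul_eq_mul, abs_mul]
            exact mul_le_mul (abs_apply_le_norm z i) (coord i (Finset.mem_range.1 hi))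
              (abs_nonneg _) (norm_nonneg _)
        _ = N * (‖z‖ * (2 * δ')) := by rw [Finset.sum_const, Finset.card_range]; ring
        _ ≤ θ * ‖z‖ := by
            rw [hδ']
            have hN1 : (N:ℝ) / (N + 1) ≤ 1 := by
              rw [div_le_one (by positivity)]; linarith
            have : (N:ℝ) * (‖z‖ * (2 * (θ / (2 * (N + 1))))) = ((N:ℝ)/(N+1)) * (θ * ‖z‖) := by
              field_simp
            rw [this]
            exact mul_le_of_le_one_left (by positivity) hN1
    -- tail estimates for g and h
    have hgx' : c < g x' := hgV.1
    have hhx' : c < h x' := hhV.1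
    have tg := tail g hgB hgx' w hw0
    have th := tail h hhB hhx' w hw0
    have hsplit : (g - h) z = (g - h) (trunc z N) + (g w - h w) := by
      conv_lhs => rw [hzsplit]
      rw [map_add, ContinuousLinearMap.sub_apply, ContinuousLinearMap.sub_apply]
    have h1c : 1 - c = ε - (3/2) * θ := by rw [hc]; ring
    calc ‖(g - h) z‖ = |(g - h) z| := rfl
      _ ≤ |(g - h) (trunc z N)| + |g w| + |h w| := by
          rw [hsplit]
          calc |(g - h) (trunc z N) + (g w - h w)|
              ≤ |(g - h) (trunc z N)| + |g w - h w| := abs_add_le _ _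
            _ ≤ |(g - h) (trunc z N)| + (|g w| + |h w|) := by linarith [abs_sub (g w) (h w)]
            _ = _ := by ring
      _ ≤ θ * ‖z‖ + (1 - c) * ‖w‖ + (1 - c) * ‖w‖ := by linarith
      _ ≤ θ * ‖z‖ + (1 - c) * ‖z‖ + (1 - c) * ‖z‖ := by
          have h1 : 0 ≤ 1 - c := by rw [h1c]; linarith
          nlinarith
      _ = (θ + 2 * (1 - c)) * ‖z‖ := by ring
      _ = (2 * ε - 2 * θ) * ‖z‖ := by rw [h1c]; ring_nf
  linarith [hd V hVopen hfV, hbound]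

end
end Stmt5Aux

/-- For `0 < ε < 1`, the Szlenk derivative of the dual unit ball of `c₀` satisfies
`(B_{c₀*})'_{2ε} = (1-ε) B_{c₀*}`. -/
theorem stmt5 (ε : ℝ) (hε0 : 0 < ε) (hε1 : ε < 1) :
    szlenkDeriv (ZeroAtInftyContinuousMap ℕ ℝ) (closedBall 0 1) (2 * ε) =
      (1 - ε) • closedBall (0 : StrongDual ℝ (ZeroAtInftyContinuousMap ℕ ℝ)) 1 := by
  have hnorm : ‖(1 - ε : ℝ)‖ = 1 - ε := by
    rw [Real.norm_eq_abs, abs_of_pos (by linarith)]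
  have hne : (1 - ε : ℝ) ≠ 0 := by linarith
  ext f
  have hmem : f ∈ (1 - ε) • closedBall (0 : StrongDual ℝ (ZeroAtInftyContinuousMap ℕ ℝ)) 1 ↔
      ‖f‖ ≤ 1 - ε := by
    rw [Set.mem_smul_set]
    constructor
    · rintro ⟨y, hy, rfl⟩
      rw [mem_closedBall_zero_iff] at hy
      rw [Stmt5Aux.norm_smul_dual, hnorm]
      nlinarith [norm_nonneg y]
    · intro hf
      refine ⟨(1 - ε)⁻¹ • f, ?_, ?_⟩
      · rw [mem_closedBall_zero_iff, Stmt5Aux.norm_smul_dual, norm_inv, hnorm,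
          inv_mul_le_iff₀ (by linarith), mul_one]
        exact hf
      · rw [smul_smul, mul_inv_cancel₀ hne, one_smul]
  rw [hmem]
  constructor
  · exact fun hf => Stmt5Aux.norm_le_of_mem_deriv hε0 hε1 f hf
  · exact fun hf => Stmt5Aux.mem_deriv_of_norm_le hε0 hε1 f hf
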